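/- arXiv:1801.02373 — 2 statements merged into one kernel-verified Lean document; each statement's English description precedes it below -/
import Mathlib

section
/- For all (u,B) ∈ ℂ^g × ℍ_g and integers n ∈ ℤ^g, the condition exp(2π(-(1/2) nᵗ(B−B')n + nᵗ(u−u'))) = 1 for all n ∈ ℤ^g holds if and only if, writing B − B' = −iβ and u − u' = (1/2)i·diag(β) + i·a, one has (1/2)nᵗβn + (1/2)nᵗdiag(β) + nᵗa ∈ ℤ for all n ∈ ℤ^g, which in turn holds if and only if β is a symmetric matrix with integer entries and a ∈ ℤ^g. -/
open scoped BigOperators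
open Matrix

noncomputable section

variable {ι : Type*} [Fintype ι] [DecidableEq ι]

/-- Cast an integer vector to a complex vector. -/
def zc (n : ι → ℤ) : ι → ℂ := fun i => (n i : ℂ)

/-- A single term of the Riemann theta series, `e(-(1/2) nᵗBn + nᵗu)` with `e(x) = exp(2πx)`. -/
def thetaTerm (u : ι → ℂ) (B : Matrix ι ι ℂ) (n : ι → ℤ) : ℂ :=
  Complex.exp ((2 * (Real.pi : ℂ)) *
    (-(1/2) * dotProduct (zc n) (B.mulVec (zc n)) + dotProduct (zc n) u))

/-- The Riemann theta function `θ(u,B) = Σ_{n∈ℤ^g} e(-(1/2) nᵗBn + nᵗu)`. -/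
def theta (u : ι → ℂ) (B : Matrix ι ι ℂ) : ℂ := ∑' n : ι → ℤ, thetaTerm u B n

/-- Membership in the Siegel right half-space: symmetric with positive definite real part. -/
def SiegelH (B : Matrix ι ι ℂ) : Prop := B.IsSymm ∧ (B.map Complex.re).PosDef

/-- The (complex) discrete Gaussian mass function. -/
def dg (u : ι → ℂ) (B : Matrix ι ι ℂ) (n : ι → ℤ) : ℂ := thetaTerm u B n / theta u B

set_option linter.unusedSectionVars false in
private lemma zc_single (i : ι) (k : ℤ) : zc (Pi.single i k) = Pi.single i (k : ℂ) := by
  funext j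
  simp only [zc, Pi.single_apply]
  split <;> simp

set_option linter.unusedSectionVars false in
private lemma zc_add (m n : ι → ℤ) : zc (m + n) = zc m + zc n := by
  funext j; simp [zc]

set_option linter.unusedSectionVars false in
private lemma diag_sum_eq (β : Matrix ι ι ℂ) (n : ι → ℤ) :
    (∑ i, (n i : ℂ) * β i i) = dotProduct (zc n) β.diag := rfl

/-- evenness of `nᵗmn + nᵗdiag m` for a symmetric integer matrix. -/
private lemma even_quad (m : ι → ι → ℤ) (hm : ∀ i j, m i j = m j i) (n : ι → ℤ) :
    Even ((∑ i, ∑ j, n i * m i j * n j) + ∑ i, n i * m i i) := by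
  rw [even_iff_two_dvd, show (2:ℤ) = ((2:ℕ):ℤ) by norm_num,
    ← ZMod.intCast_zmod_eq_zero_iff_dvd]
  push_cast
  rw [← Finset.sum_product' (f := fun i j => (n i : ZMod 2) * (m i j : ZMod 2) * (n j : ZMod 2))]
  rw [← Finset.diag_union_offDiag, Finset.sum_union (Finset.disjoint_diag_offDiag _),
    Finset.sum_diag]
  have hoff : ∑ p ∈ (Finset.univ : Finset ι).offDiag,
      ((n p.1 : ZMod 2) * (m p.1 p.2 : ZMod 2) * (n p.2 : ZMod 2)) = 0 := by
    apply Finset.sum_involution (g := fun p _ => Prod.swap p)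
    · intro p _
      have : (m p.2 p.1 : ZMod 2) = (m p.1 p.2 : ZMod 2) := by rw [hm]
      simp only [Prod.swap, this]
      ring_nf
      rw [(by decide : (2 : ZMod 2) = 0), mul_zero]
    · intro p hp _
      simp only [Finset.mem_offDiag] at hp
      simp only [Prod.swap, ne_eq, Prod.ext_iff, not_and]
      exact fun h => absurd h.symm hp.2.2
    · intro p hp
      simp only [Finset.mem_offDiag] at hp ⊢
      exact ⟨hp.2.1, hp.1, fun h => hp.2.2 h.symm⟩
    · intro p _; simp
  rw [hoff, add_zero, ← Finset.sum_add_distrib]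
  apply Finset.sum_eq_zero
  intro i _
  have h2 : ∀ x y : ZMod 2, x*y*x + x*y = 0 := by decide
  linear_combination h2 (n i) (m i i)

/-- The condition `e(-(1/2)nᵗ(B-B')n + nᵗ(u-u')) = 1` for all `n ∈ ℤ^g` holds iff, writing
`B - B' = -iβ` and `u - u' = (1/2)i·diag(β) + i·a`, one has
`(1/2)nᵗβn + (1/2)nᵗdiag(β) + nᵗa ∈ ℤ` for all `n`, which holds iff `β` has integer
entries and `a ∈ ℤ^g`. -/
theorem dg_equivalence_conditions (u u' : ι → ℂ) (B B' : Matrix ι ι ℂ)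
    (β : Matrix ι ι ℂ) (a : ι → ℂ) (hβsymm : β.IsSymm)
    (hβ : B - B' = -Complex.I • β)
    (ha : u - u' = fun j => (1/2) * Complex.I * β j j + Complex.I * a j) :
    ((∀ n : ι → ℤ, Complex.exp ((2 * (Real.pi : ℂ)) *
        (-(1/2) * dotProduct (zc n) ((B - B').mulVec (zc n)) + dotProduct (zc n) (u - u'))) = 1) ↔
      (∀ n : ι → ℤ, ∃ z : ℤ,
        (1/2) * dotProduct (zc n) (β.mulVec (zc n)) + (1/2) * (∑ i, (n i : ℂ) * β i i) +
          dotProduct (zc n) a = (z : ℂ))) ∧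
    ((∀ n : ι → ℤ, ∃ z : ℤ,
        (1/2) * dotProduct (zc n) (β.mulVec (zc n)) + (1/2) * (∑ i, (n i : ℂ) * β i i) +
          dotProduct (zc n) a = (z : ℂ)) ↔
      ((∀ i j, ∃ z : ℤ, β i j = (z : ℂ)) ∧ (∀ i, ∃ z : ℤ, a i = (z : ℂ)))) := by
  have hsym : ∀ i j, β j i = β i j := fun i j => hβsymm.apply i j
  constructor
  · -- first iff
    apply forall_congr'
    intro n
    have harg : (2 * (Real.pi : ℂ)) *
        (-(1/2) * dotProduct (zc n) ((B - B').mulVec (zc n)) + dotProduct (zc n) (u - u'))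
        = ((2 * Real.pi * Complex.I : ℂ)) *
          ((1/2) * dotProduct (zc n) (β.mulVec (zc n)) + (1/2) * (∑ i, (n i : ℂ) * β i i) +
            dotProduct (zc n) a) := by
      rw [hβ, ha, diag_sum_eq]
      have h1 : ((-Complex.I) • β).mulVec (zc n) = (-Complex.I) • β.mulVec (zc n) :=
        Matrix.smul_mulVec _ _ _
      have h2 : (fun j => (1/2) * Complex.I * β j j + Complex.I * a j)
          = ((1/2) * Complex.I) • β.diag + Complex.I • a := by
        funext j
        simp [Matrix.diag, Pi.smul_apply, smul_eq_mul]
      rw [h1, h2, dotProduct_smul, dotProduct_add, dotProduct_smul,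
        dotProduct_smul]
      simp only [smul_eq_mul]
      ring
    rw [harg, Complex.exp_eq_one_iff]
    constructor
    · rintro ⟨z, hz⟩
      exact ⟨z, mul_left_cancel₀ Complex.two_pi_I_ne_zero (hz.trans (mul_comm _ _))⟩
    · rintro ⟨z, hz⟩
      exact ⟨z, by rw [hz]; ring⟩
  · -- second iff
    constructor
    · intro h
      -- compute the expression at single vectors
      have hE1 : ∀ i : ι, ∃ z : ℤ, β i i + a i = (z : ℂ) := by
        intro i
        obtain ⟨z, hz⟩ := h (Pi.single i 1)
        rw [diag_sum_eq, zc_single, single_dotProduct, single_dotProduct,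
          Matrix.mulVec_single, single_dotProduct] at hz
        refine ⟨z, ?_⟩
        rw [← hz]
        simp [Matrix.diag]
        ring
      have hE2 : ∀ i : ι, ∃ z : ℤ, 3 * β i i + 2 * a i = (z : ℂ) := by
        intro i
        obtain ⟨z, hz⟩ := h (Pi.single i 2)
        rw [diag_sum_eq, zc_single, single_dotProduct, single_dotProduct,
          Matrix.mulVec_single, single_dotProduct] at hz
        refine ⟨z, ?_⟩
        rw [← hz]
        simp [Matrix.diag]
        ring
      have hdiag : ∀ i : ι, ∃ z : ℤ, β i i = (z : ℂ) := by
        intro i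
        obtain ⟨z1, hz1⟩ := hE1 i
        obtain ⟨z2, hz2⟩ := hE2 i
        exact ⟨z2 - 2 * z1, by push_cast; linear_combination hz2 - 2 * hz1⟩
      have hA : ∀ i : ι, ∃ z : ℤ, a i = (z : ℂ) := by
        intro i
        obtain ⟨z1, hz1⟩ := hE1 i
        obtain ⟨zb, hzb⟩ := hdiag i
        exact ⟨z1 - zb, by push_cast; linear_combination hz1 - hzb⟩
      refine ⟨?_, hA⟩
      intro i j
      by_cases hij : i = j
      · subst hij; exact hdiag i
      · obtain ⟨z, hz⟩ := h (Pi.single i 1 + Pi.single j 1)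
        rw [diag_sum_eq, zc_add, zc_single, zc_single] at hz
        rw [Matrix.mulVec_add, add_dotProduct, add_dotProduct,
          add_dotProduct, dotProduct_add, dotProduct_add] at hz
        rw [Matrix.mulVec_single, Matrix.mulVec_single] at hz
        simp only [single_dotProduct] at hz
        obtain ⟨zi, hzi⟩ := hdiag i
        obtain ⟨zj, hzj⟩ := hdiag j
        obtain ⟨wi, hwi⟩ := hA i
        obtain ⟨wj, hwj⟩ := hA j
        refine ⟨z - zi - zj - wi - wj, ?_⟩
        push_cast
        have hji : β j i = β i j := hsym i j
        simp [Matrix.diag] at hz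
        linear_combination hz - hzi - hzj - hwi - hwj - (1/2) * hji
    · rintro ⟨hβint, haint⟩ n
      choose m hm using hβint
      choose b hb using haint
      have hmsym : ∀ i j, m i j = m j i := by
        intro i j
        have : ((m i j : ℂ)) = ((m j i : ℂ)) := by rw [← hm, ← hm, hsym]
        exact_mod_cast this
      obtain ⟨k, hk⟩ := even_quad m hmsym n
      refine ⟨k + ∑ i, n i * b i, ?_⟩
      have hS : dotProduct (zc n) (β.mulVec (zc n))
          = ((∑ i, ∑ j, n i * m i j * n j : ℤ) : ℂ) := by
        simp only [dotProduct, mulVec, zc, hm]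
        push_cast
        refine Finset.sum_congr rfl fun i _ => ?_
        rw [Finset.mul_sum]
        refine Finset.sum_congr rfl fun j _ => by ring
      have hT : (∑ i, (n i : ℂ) * β i i) = ((∑ i, n i * m i i : ℤ) : ℂ) := by
        simp only [hm]
        push_cast
        rfl
      have hU : dotProduct (zc n) a = ((∑ i, n i * b i : ℤ) : ℂ) := by
        simp only [dotProduct, zc, hb]
        push_cast
        rfl
      rw [hS, hT, hU]
      have hk' : ((∑ i, ∑ j, n i * m i j * n j : ℤ) : ℂ) + ((∑ i, n i * m i i : ℤ) : ℂ)
          = 2 * (k : ℂ) := by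
        rw [← Int.cast_add]
        rw [hk]
        push_cast
        ring
      push_cast at hk' ⊢
      linear_combination (1/2) * hk'
end
end

section
/- Let X = (X₁,X₂) be a discrete Gaussian on ℤ^{g₁} × ℤ^{g₂} with parameters (u,B), B = [[B₁₁,B₁₂],[B₁₂ᵗ,B₂₂]]. If X₁ and X₂ are independent, then every entry of B₁₂ lies in iℤ (i.e., exp(2π n₁ᵗB₁₂n₂) = 1 for all n₁ ∈ ℤ^{g₁}, n₂ ∈ ℤ^{g₂}). -/
open scoped BigOperators
open Matrix

noncomputable section

variable {ι : Type*} [Fintype ι] [DecidableEq ι]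

omit [Fintype ι] [DecidableEq ι] in
lemma zc_zero' : zc (0 : ι → ℤ) = 0 := by funext i; simp [zc]

lemma thetaTerm_zero (u : ι → ℂ) (B : Matrix ι ι ℂ) : thetaTerm u B 0 = 1 := by
  simp [thetaTerm, zc_zero']

lemma zc_sum_elim {ι₁ ι₂ : Type*} (n₁ : ι₁ → ℤ) (n₂ : ι₂ → ℤ) :
    zc (Sum.elim n₁ n₂) = Sum.elim (zc n₁) (zc n₂) := by
  funext x; cases x <;> rfl

lemma thetaTerm_block {ι₁ ι₂ : Type*} [Fintype ι₁] [DecidableEq ι₁]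
    [Fintype ι₂] [DecidableEq ι₂]
    (u₁ : ι₁ → ℂ) (u₂ : ι₂ → ℂ) (B₁₁ : Matrix ι₁ ι₁ ℂ) (B₁₂ : Matrix ι₁ ι₂ ℂ)
    (B₂₂ : Matrix ι₂ ι₂ ℂ) (n₁ : ι₁ → ℤ) (n₂ : ι₂ → ℤ) :
    thetaTerm (Sum.elim u₁ u₂) (Matrix.fromBlocks B₁₁ B₁₂ B₁₂ᵀ B₂₂) (Sum.elim n₁ n₂)
      = thetaTerm u₁ B₁₁ n₁ * thetaTerm u₂ B₂₂ n₂ *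
        Complex.exp (-(2 * (Real.pi : ℂ)) * (zc n₁ ⬝ᵥ B₁₂ *ᵥ zc n₂)) := by
  rw [thetaTerm, thetaTerm, thetaTerm, ← Complex.exp_add, ← Complex.exp_add]
  congr 1
  rw [zc_sum_elim, fromBlocks_mulVec, sumElim_dotProduct_sumElim,
      sumElim_dotProduct_sumElim]
  simp only [Sum.elim_comp_inl, Sum.elim_comp_inr, dotProduct_add]
  have h : zc n₂ ⬝ᵥ B₁₂ᵀ *ᵥ zc n₁ = zc n₁ ⬝ᵥ B₁₂ *ᵥ zc n₂ := by
    rw [dotProduct_mulVec, vecMul_transpose, dotProduct_comm]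
  rw [h]; ring

/-- If the components of a joint discrete Gaussian with block parameter
`B = [[B₁₁,B₁₂],[B₁₂ᵗ,B₂₂]]` are independent, then every entry of `B₁₂` lies in `iℤ`,
equivalently `e(n₁ᵗB₁₂n₂) = 1` for all integer vectors `n₁, n₂`. -/
theorem dg_indep_offdiag {ι₁ ι₂ : Type*} [Fintype ι₁] [DecidableEq ι₁]
    [Fintype ι₂] [DecidableEq ι₂]
    (u₁ : ι₁ → ℂ) (u₂ : ι₂ → ℂ) (B₁₁ : Matrix ι₁ ι₁ ℂ) (B₁₂ : Matrix ι₁ ι₂ ℂ)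
    (B₂₂ : Matrix ι₂ ι₂ ℂ)
    (hB : SiegelH (Matrix.fromBlocks B₁₁ B₁₂ B₁₂ᵀ B₂₂))
    (hθ : theta (Sum.elim u₁ u₂) (Matrix.fromBlocks B₁₁ B₁₂ B₁₂ᵀ B₂₂) ≠ 0)
    (hindep : ∀ (n₁ : ι₁ → ℤ) (n₂ : ι₂ → ℤ),
      dg (Sum.elim u₁ u₂) (Matrix.fromBlocks B₁₁ B₁₂ B₁₂ᵀ B₂₂) (Sum.elim n₁ n₂) =
        (∑' m₂ : ι₂ → ℤ,
            dg (Sum.elim u₁ u₂) (Matrix.fromBlocks B₁₁ B₁₂ B₁₂ᵀ B₂₂) (Sum.elim n₁ m₂)) *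
          (∑' m₁ : ι₁ → ℤ,
            dg (Sum.elim u₁ u₂) (Matrix.fromBlocks B₁₁ B₁₂ B₁₂ᵀ B₂₂) (Sum.elim m₁ n₂))) :
    (∀ i j, ∃ z : ℤ, B₁₂ i j = (z : ℂ) * Complex.I) ∧
    (∀ (n₁ : ι₁ → ℤ) (n₂ : ι₂ → ℤ),
      Complex.exp ((2 * (Real.pi : ℂ)) * dotProduct (zc n₁) (B₁₂.mulVec (zc n₂))) = 1) := by
  classical
  set B : Matrix (ι₁ ⊕ ι₂) (ι₁ ⊕ ι₂) ℂ := Matrix.fromBlocks B₁₁ B₁₂ B₁₂ᵀ B₂₂ with hBdef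
  set u : ι₁ ⊕ ι₂ → ℂ := Sum.elim u₁ u₂ with hudef
  set θ : ℂ := theta u B with hθdef
  set T : (ι₁ → ℤ) → (ι₂ → ℤ) → ℂ := fun m₁ m₂ => thetaTerm u B (Sum.elim m₁ m₂) with hTdef
  have hkey : ∀ m₁ m₂, T m₁ m₂ * θ = (∑' k₂, T m₁ k₂) * (∑' k₁, T k₁ m₂) := by
    intro m₁ m₂
    have h := hindep m₁ m₂
    simp only [dg, ← hBdef, ← hudef, ← hθdef, ← hTdef] at h
    rw [tsum_div_const, tsum_div_const, div_mul_div_comm,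
        div_eq_div_iff hθ (mul_ne_zero hθ hθ)] at h
    apply mul_right_cancel₀ hθ
    calc T m₁ m₂ * θ * θ = T m₁ m₂ * (θ * θ) := by ring
      _ = (∑' k₂, T m₁ k₂) * (∑' k₁, T k₁ m₂) * θ := h
  have hT0 : T 0 0 = 1 := by
    simp only [hTdef, hudef, hBdef, thetaTerm_block, thetaTerm_zero, zc_zero', zero_dotProduct,
      mul_zero, Complex.exp_zero, mul_one, one_mul]
  have hE : ∀ (n₁ : ι₁ → ℤ) (n₂ : ι₂ → ℤ),
      Complex.exp (-(2 * (Real.pi : ℂ)) * (zc n₁ ⬝ᵥ B₁₂ *ᵥ zc n₂)) = 1 := by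
    intro n₁ n₂
    have h1 := hkey 0 0
    rw [hT0, one_mul] at h1
    have h2 := hkey n₁ 0
    have h3 := hkey 0 n₂
    have h4 := hkey n₁ n₂
    have hmul : T n₁ 0 * T 0 n₂ = T n₁ n₂ := by
      apply mul_left_cancel₀ hθ
      apply mul_left_cancel₀ hθ
      linear_combination (T 0 n₂ * θ) * h2 + ((∑' k₂, T n₁ k₂) * (∑' k₁, T k₁ 0)) * h3
        - θ * h4 - ((∑' k₂, T n₁ k₂) * (∑' k₁, T k₁ n₂)) * h1
    have e10 : T n₁ 0 = thetaTerm u₁ B₁₁ n₁ := by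
      rw [hTdef]
      simp only [hudef, hBdef, thetaTerm_block, thetaTerm_zero, zc_zero', mulVec_zero, dotProduct_zero,
        mul_zero, Complex.exp_zero, mul_one]
    have e01 : T 0 n₂ = thetaTerm u₂ B₂₂ n₂ := by
      rw [hTdef]
      simp only [hudef, hBdef, thetaTerm_block, thetaTerm_zero, zc_zero', zero_dotProduct,
        mul_zero, Complex.exp_zero, mul_one, one_mul]
    have enn : T n₁ n₂ = thetaTerm u₁ B₁₁ n₁ * thetaTerm u₂ B₂₂ n₂ *
        Complex.exp (-(2 * (Real.pi : ℂ)) * (zc n₁ ⬝ᵥ B₁₂ *ᵥ zc n₂)) := by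
      rw [hTdef, hudef, hBdef]; exact thetaTerm_block u₁ u₂ B₁₁ B₁₂ B₂₂ n₁ n₂
    rw [e10, e01, enn] at hmul
    have hne : thetaTerm u₁ B₁₁ n₁ * thetaTerm u₂ B₂₂ n₂ ≠ 0 :=
      mul_ne_zero (Complex.exp_ne_zero _) (Complex.exp_ne_zero _)
    refine (mul_left_cancel₀ hne (b := 1) ?_).symm
    rw [mul_one]; exact hmul
  have hE' : ∀ (n₁ : ι₁ → ℤ) (n₂ : ι₂ → ℤ),
      Complex.exp ((2 * (Real.pi : ℂ)) * dotProduct (zc n₁) (B₁₂.mulVec (zc n₂))) = 1 := by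
    intro n₁ n₂
    rw [show (2 * (Real.pi : ℂ)) * dotProduct (zc n₁) (B₁₂.mulVec (zc n₂))
        = -(-(2 * (Real.pi : ℂ)) * (zc n₁ ⬝ᵥ B₁₂ *ᵥ zc n₂)) by ring,
      Complex.exp_neg, hE n₁ n₂, inv_one]
  refine ⟨fun i j => ?_, hE'⟩
  have hd : zc (Pi.single i 1) ⬝ᵥ B₁₂ *ᵥ zc (Pi.single j 1) = B₁₂ i j := by
    simp [zc, dotProduct, mulVec, Pi.single_apply, ite_mul, mul_ite,
      apply_ite (fun z : ℤ => (z : ℂ))]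
  have h := hE' (Pi.single i 1) (Pi.single j 1)
  rw [hd] at h
  obtain ⟨k, hk⟩ := Complex.exp_eq_one_iff.mp h
  refine ⟨k, ?_⟩
  have h2π : (2 * (Real.pi : ℂ)) ≠ 0 := by
    simp [Real.pi_ne_zero]
  apply mul_left_cancel₀ h2π
  rw [hk]; ring
end
end
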